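/- If the kernel of X ∈ ℝ^{n×p} satisfies NSP(s, C) with C > 1, then for every β* ∈ ℝ^p and every minimizer β̂ of ‖β‖₁ subject to Xβ = Xβ*, one has ‖β* − β̂‖₁ ≤ (2(C+1)/(C−1)) · min_{|S| ≤ s} ‖β* − β*_S‖₁. -/

import Mathlib

/-- If the kernel of `X` satisfies NSP(s, C) with `C > 1`, then every `ℓ¹`
minimizer `β̂` subject to `Xβ̂ = Xβ*` satisfies
`‖β* − β̂‖₁ ≤ (2(C+1)/(C−1)) · min_{|S| ≤ s} ‖β* − β*_S‖₁`
(stated equivalently as the bound for every `S` with `|S| ≤ s`,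
where `‖β* − β*_S‖₁ = ∑_{i ∉ S} |β*_i|`). -/
theorem nsp_l1_error_bound {n p : ℕ} (X : Matrix (Fin n) (Fin p) ℝ)
    (s : ℕ) (C : ℝ) (hC : 1 < C)
    (hNSP : ∀ γ : Fin p → ℝ, X.mulVec γ = 0 → ∀ S : Finset (Fin p), S.card ≤ s →
      C * ∑ i ∈ S, |γ i| ≤ ∑ i ∈ Sᶜ, |γ i|)
    (β βh : Fin p → ℝ)
    (hfeas : X.mulVec βh = X.mulVec β)
    (hmin : ∀ β' : Fin p → ℝ, X.mulVec β' = X.mulVec β →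
      ∑ i, |βh i| ≤ ∑ i, |β' i|) :
    ∀ S : Finset (Fin p), S.card ≤ s →
      ∑ i, |β i - βh i| ≤ (2 * (C + 1) / (C - 1)) * ∑ i ∈ Sᶜ, |β i| := by
  intro S hS
  have hker : X.mulVec (fun i => β i - βh i) = 0 := by
    have : X.mulVec (β - βh) = 0 := by
      rw [Matrix.mulVec_sub, hfeas, sub_self]
    exact this
  have hN := hNSP _ hker S hS
  set A := ∑ i ∈ S, |β i - βh i| with hAdef
  set B := ∑ i ∈ Sᶜ, |β i - βh i| with hBdef
  set b := ∑ i ∈ Sᶜ, |β i| with hbdef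
  have hA0 : 0 ≤ A := Finset.sum_nonneg fun i _ => abs_nonneg _
  have hb0 : 0 ≤ b := Finset.sum_nonneg fun i _ => abs_nonneg _
  have hmin' := hmin β rfl
  have hsplit1 : ∑ i, |βh i| = ∑ i ∈ S, |βh i| + ∑ i ∈ Sᶜ, |βh i| :=
    (Finset.sum_add_sum_compl S _).symm
  have hsplit2 : ∑ i, |β i| = ∑ i ∈ S, |β i| + b :=
    (Finset.sum_add_sum_compl S _).symm
  have hsplit3 : ∑ i, |β i - βh i| = A + B :=
    (Finset.sum_add_sum_compl S _).symm
  have h1 : ∑ i ∈ S, |β i| - A ≤ ∑ i ∈ S, |βh i| := by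
    rw [hAdef, ← Finset.sum_sub_distrib]
    refine Finset.sum_le_sum fun i _ => ?_
    have := abs_sub_abs_le_abs_sub (β i) (βh i)
    linarith
  have h2 : B - b ≤ ∑ i ∈ Sᶜ, |βh i| := by
    rw [hBdef, hbdef, ← Finset.sum_sub_distrib]
    refine Finset.sum_le_sum fun i _ => ?_
    have h := abs_sub_abs_le_abs_sub (β i - βh i) (β i)
    have : |β i - βh i - β i| = |βh i| := by
      rw [sub_sub_cancel_left, abs_neg]
    linarith
  have hBA : B ≤ A + 2 * b := by
    rw [hsplit1, hsplit2] at hmin'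
    linarith
  rw [hsplit3, div_mul_eq_mul_div, le_div_iff₀ (by linarith : (0:ℝ) < C - 1)]
  nlinarith [hN, hBA, hA0, hb0]
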